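/- arXiv:1412.1621 — 2 statements merged into one kernel-verified Lean document; each statement's English description precedes it below -/
import Mathlib

section
/- Let x : ℝ → ℝ and u : ℝ → ℝ be three times continuously differentiable in a neighbourhood of ξ₀ and of x(ξ₀) respectively, with x'(ξ₀) ≠ 0. Then the non-standard central difference formula for the first derivative is second order accurate: as h → 0, [u(x(ξ₀ + h/2)) − u(x(ξ₀ − h/2))] / [2·(x(ξ₀ + h/4) − x(ξ₀ − h/4))] − u'(x(ξ₀)) = O(h²). -/
open Filter Asymptotics

/-- MVT bootstrap: if `f 0 = 0` and `f' = O(t^n)` near `0`, then `f = O(t^(n+1))`. -/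
lemma mvt_bootstrap {f f' : ℝ → ℝ} {n : ℕ}
    (hdiff : ∀ᶠ t in nhds (0 : ℝ), HasDerivAt f (f' t) t) (h0 : f 0 = 0)
    (hb : f' =O[nhds (0 : ℝ)] fun t => t ^ n) :
    f =O[nhds (0 : ℝ)] fun t => t ^ (n + 1) := by
  rcases hb.exists_pos with ⟨C, hC, hC'⟩
  rw [Asymptotics.isBigOWith_iff] at hC'
  rcases Metric.eventually_nhds_iff_ball.mp (hdiff.and hC') with ⟨δ, hδ, hball⟩
  rw [Asymptotics.isBigO_iff]
  refine ⟨C, ?_⟩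
  rw [Metric.eventually_nhds_iff_ball]
  refine ⟨δ, hδ, fun t ht => ?_⟩
  have htδ : |t| < δ := by simpa [Real.dist_eq] using ht
  have hsub : Metric.closedBall (0 : ℝ) |t| ⊆ Metric.ball (0 : ℝ) δ := by
    intro y hy
    simp only [Metric.mem_closedBall, Metric.mem_ball, Real.dist_eq, sub_zero] at hy ⊢
    exact lt_of_le_of_lt hy htδ
  have hdiff' : ∀ y ∈ Metric.closedBall (0 : ℝ) |t|, DifferentiableAt ℝ f y :=
    fun y hy => (hball y (hsub hy)).1.differentiableAt
  have hbound : ∀ y ∈ Metric.closedBall (0 : ℝ) |t|, ‖deriv f y‖ ≤ C * |t| ^ n := by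
    intro y hy
    have h1 := (hball y (hsub hy)).2
    have h2 : deriv f y = f' y := (hball y (hsub hy)).1.deriv
    rw [h2]
    refine le_trans h1 ?_
    have hyt : |y| ≤ |t| := by
      simpa [Real.dist_eq] using Metric.mem_closedBall.mp hy
    have : ‖y ^ n‖ ≤ |t| ^ n := by
      rw [Real.norm_eq_abs, abs_pow]
      exact pow_le_pow_left₀ (abs_nonneg y) hyt n
    nlinarith [abs_nonneg (y ^ n)]
  have ht0 : (0 : ℝ) ∈ Metric.closedBall (0 : ℝ) |t| := Metric.mem_closedBall_self (abs_nonneg t)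
  have htt : t ∈ Metric.closedBall (0 : ℝ) |t| := by
    simp [Metric.mem_closedBall, Real.dist_eq]
  have key := (convex_closedBall (0 : ℝ) |t|).norm_image_sub_le_of_norm_deriv_le
    hdiff' hbound ht0 htt
  rw [h0, sub_zero] at key
  calc ‖f t‖ ≤ C * |t| ^ n * ‖t - 0‖ := key
    _ = C * ‖t ^ (n + 1)‖ := by
        rw [Real.norm_eq_abs, Real.norm_eq_abs, sub_zero, abs_pow, pow_succ]; ring

/-- One step of differentiating a `ContDiffAt` hypothesis. -/
lemma contDiffAt_step {g : ℝ → ℝ} {x₀ : ℝ} {n : ℕ}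
    (h : ContDiffAt ℝ (n + 1) g x₀) :
    (∀ᶠ t in nhds x₀, DifferentiableAt ℝ g t) ∧ ContDiffAt ℝ n (deriv g) x₀ := by
  constructor
  · have := h.eventually (by simp)
    exact this.mono fun y hy => hy.differentiableAt (by simp)
  · have h' : ContDiffAt ℝ n (fderiv ℝ g) x₀ :=
      h.fderiv_right (by exact_mod_cast le_refl (n + 1 : ℕ))
    have heq : deriv g = fun y => fderiv ℝ g y 1 := funext fun y => rfl
    rw [heq]
    exact ContDiffAt.comp x₀
      ((ContinuousLinearMap.apply ℝ ℝ (1 : ℝ)).contDiff.contDiffAt) h'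

/-- Peano-form second-order Taylor remainder bound for a `C³` function. -/
lemma taylor2_bigO {g : ℝ → ℝ} (hg : ContDiffAt ℝ 3 g 0) :
    (fun t => g t - g 0 - deriv g 0 * t - deriv (deriv g) 0 / 2 * t ^ 2)
      =O[nhds (0 : ℝ)] fun t => t ^ 3 := by
  have hg' : ContDiffAt ℝ ((2 : ℕ) + 1) g 0 := by exact_mod_cast hg
  obtain ⟨E1, h2⟩ := contDiffAt_step hg'
  have h2' : ContDiffAt ℝ ((1 : ℕ) + 1) (deriv g) 0 := by exact_mod_cast h2
  obtain ⟨E2, h1⟩ := contDiffAt_step h2'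
  have hdiff2 : DifferentiableAt ℝ (deriv (deriv g)) 0 :=
    h1.differentiableAt (by simp)
  have r2 : (fun t => deriv (deriv g) t - deriv (deriv g) 0) =O[nhds (0 : ℝ)]
      fun t => t ^ 1 := by
    have := hdiff2.isBigO_sub
    simpa [pow_one] using this
  set c := deriv (deriv g) 0 with hc
  have r1 : (fun t => deriv g t - deriv g 0 - c * t) =O[nhds (0 : ℝ)] fun t => t ^ 2 := by
    refine mvt_bootstrap (f' := fun t => deriv (deriv g) t - c) ?_ (by simp) r2
    refine E2.mono fun t ht => ?_
    have h1 : HasDerivAt (fun s => deriv g s - deriv g 0) (deriv (deriv g) t) t :=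
      ht.hasDerivAt.sub_const _
    have h2 : HasDerivAt (fun s : ℝ => c * s) c t := by
      simpa using (hasDerivAt_id t).const_mul c
    exact h1.sub h2
  refine mvt_bootstrap (f' := fun t => deriv g t - deriv g 0 - c * t) ?_ (by simp) r1
  refine E1.mono fun t ht => ?_
  have h1 : HasDerivAt (fun s => g s - g 0 - deriv g 0 * s) (deriv g t - deriv g 0 * 1) t := by
    exact (ht.hasDerivAt.sub_const _).sub ((hasDerivAt_id t).const_mul _)
  have h2 : HasDerivAt (fun s : ℝ => c / 2 * s ^ 2) (c / 2 * (2 * t ^ 1)) t :=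
    (hasDerivAt_pow 2 t).const_mul _
  have : HasDerivAt (fun s => g s - g 0 - deriv g 0 * s - c / 2 * s ^ 2) _ t := h1.sub h2
  convert this using 1
  ring

/-- Symmetric difference of a `C³` function is first-order accurate with `O(h³)` error. -/
lemma sym_bigO {g : ℝ → ℝ} (hg : ContDiffAt ℝ 3 g 0) (c : ℝ) :
    (fun h => g (c * h) - g (-(c * h)) - 2 * deriv g 0 * c * h)
      =O[nhds (0 : ℝ)] fun h => h ^ 3 := by
  have T := taylor2_bigO hg
  have t1 : Filter.Tendsto (fun h : ℝ => c * h) (nhds 0) (nhds 0) := by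
    have : Continuous fun h : ℝ => c * h := continuous_const.mul continuous_id
    simpa using this.tendsto 0
  have t2 : Filter.Tendsto (fun h : ℝ => -(c * h)) (nhds 0) (nhds 0) := by
    have : Continuous fun h : ℝ => -(c * h) := (continuous_const.mul continuous_id).neg
    simpa using this.tendsto 0
  have T1 := T.comp_tendsto t1
  have T2 := T.comp_tendsto t2
  have hb1 : (fun h : ℝ => (c * h) ^ 3) =O[nhds (0 : ℝ)] fun h => h ^ 3 := by
    simpa [mul_pow] using
      (isBigO_refl (fun h : ℝ => h ^ 3) (nhds (0 : ℝ))).const_mul_left (c ^ 3)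
  have hb2 : (fun h : ℝ => (-(c * h)) ^ 3) =O[nhds (0 : ℝ)] fun h => h ^ 3 := by
    have := hb1.neg_left
    refine this.congr_left fun h => ?_
    ring
  have := (T1.trans hb1).sub (T2.trans hb2)
  refine this.congr (fun h => ?_) (fun h => rfl)
  simp only [Function.comp]
  ring



/-- The non-standard central difference formula for the first derivative on a
quasi-uniform grid is second order accurate: as `h → 0`,
`[u(x(ξ₀+h/2)) − u(x(ξ₀−h/2))] / [2(x(ξ₀+h/4) − x(ξ₀−h/4))] − u'(x(ξ₀)) = O(h²)`. -/
theorem nonstandard_first_derivative_second_order (x u : ℝ → ℝ) (ξ₀ : ℝ)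
    (hx : ContDiffAt ℝ 3 x ξ₀) (hu : ContDiffAt ℝ 3 u (x ξ₀))
    (hx' : deriv x ξ₀ ≠ 0) :
    (fun h : ℝ =>
        (u (x (ξ₀ + h / 2)) - u (x (ξ₀ - h / 2))) /
            (2 * (x (ξ₀ + h / 4) - x (ξ₀ - h / 4))) -
          deriv u (x ξ₀)) =O[nhdsWithin 0 {(0 : ℝ)}ᶜ] fun h : ℝ => h ^ 2 := by
  set b := deriv x ξ₀ with hbdef
  set d := deriv u (x ξ₀) with hddef
  set X₁ : ℝ → ℝ := fun h => x (ξ₀ + h) with hX₁def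
  set G : ℝ → ℝ := fun h => u (x (ξ₀ + h)) with hGdef
  -- smoothness of shifted functions
  have hshift : ContDiffAt ℝ 3 (fun h : ℝ => ξ₀ + h) 0 :=
    (contDiff_const.add contDiff_id).contDiffAt
  have hx0 : ContDiffAt ℝ 3 x ((fun h : ℝ => ξ₀ + h) 0) := by simpa using hx
  have hX : ContDiffAt ℝ 3 X₁ 0 := hx0.comp 0 hshift
  have hu0 : ContDiffAt ℝ 3 u (X₁ 0) := by
    simp only [hX₁def, add_zero]; exact hu
  have hG : ContDiffAt ℝ 3 G 0 := hu0.comp 0 hX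
  -- derivatives at 0
  have hsd : HasDerivAt (fun h : ℝ => ξ₀ + h) 1 0 := by
    simpa using (hasDerivAt_id (0 : ℝ)).const_add ξ₀
  have hxd : HasDerivAt x b (ξ₀ + 0) := by
    rw [add_zero]
    exact (hx.differentiableAt (by norm_num)).hasDerivAt
  have hX1d : HasDerivAt X₁ b 0 := by
    have h := HasDerivAt.comp 0 hxd hsd; rw [mul_one] at h; exact h
  have hud : HasDerivAt u d (X₁ 0) := by
    have : X₁ 0 = x ξ₀ := by simp [hX₁def]
    rw [this]
    exact (hu.differentiableAt (by norm_num)).hasDerivAt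
  have hG1d : HasDerivAt G (d * b) 0 := HasDerivAt.comp 0 hud hX1d
  have hderivG : deriv G 0 = d * b := hG1d.deriv
  have hderivX : deriv X₁ 0 = b := hX1d.deriv
  -- numerator and denominator asymptotics
  set N : ℝ → ℝ := fun h => u (x (ξ₀ + h / 2)) - u (x (ξ₀ - h / 2)) with hNdef
  set D : ℝ → ℝ := fun h => 2 * (x (ξ₀ + h / 4) - x (ξ₀ - h / 4)) with hDdef
  have hN : (fun h => N h - d * b * h) =O[nhds (0 : ℝ)] fun h => h ^ 3 := by
    have := sym_bigO hG (1 / 2)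
    rw [hderivG] at this
    refine this.congr (fun h => ?_) (fun h => rfl)
    have e1 : ξ₀ + 1 / 2 * h = ξ₀ + h / 2 := by ring
    have e2 : ξ₀ + -(1 / 2 * h) = ξ₀ - h / 2 := by ring
    simp only [hGdef, hNdef, e1, e2]
    ring
  have hD : (fun h => D h - b * h) =O[nhds (0 : ℝ)] fun h => h ^ 3 := by
    have := (sym_bigO hX (1 / 4)).const_mul_left 2
    rw [hderivX] at this
    refine this.congr (fun h => ?_) (fun h => rfl)
    have e1 : ξ₀ + 1 / 4 * h = ξ₀ + h / 4 := by ring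
    have e2 : ξ₀ + -(1 / 4 * h) = ξ₀ - h / 4 := by ring
    simp only [hX₁def, hDdef, e1, e2]
    ring
  -- now work on the punctured neighbourhood
  set l : Filter ℝ := nhdsWithin 0 {(0 : ℝ)}ᶜ with hldef
  have heq0 : ∀ᶠ h in l, h ≠ 0 := by
    have : {(0 : ℝ)}ᶜ ∈ l := self_mem_nhdsWithin
    exact Filter.eventually_iff_exists_mem.mpr ⟨_, this, fun h hh => hh⟩
  have hle : l ≤ nhds (0 : ℝ) := nhdsWithin_le_nhds
  have hDl := hD.mono hle
  -- D h / h → b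
  have hq : (fun h => (D h - b * h) / h) =O[l] fun h => h ^ 2 := by
    have step1 : (fun h => (D h - b * h) * h⁻¹) =O[l]
        fun h => h ^ 3 * h⁻¹ := hDl.mul (isBigO_refl (fun h : ℝ => h⁻¹) l)
    refine step1.congr' (Filter.Eventually.of_forall fun h => (div_eq_mul_inv _ _).symm)
      (heq0.mono fun h hh => ?_)
    field_simp
  have htend0 : Filter.Tendsto (fun h : ℝ => h ^ 2) l (nhds 0) := by
    have : Filter.Tendsto (fun h : ℝ => h ^ 2) (nhds 0) (nhds 0) := by
      simpa using (continuous_pow 2).tendsto (0 : ℝ)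
    exact this.mono_left hle
  have hq0 : Filter.Tendsto (fun h => (D h - b * h) / h) l (nhds 0) :=
    hq.trans_tendsto htend0
  have htend : Filter.Tendsto (fun h => D h / h) l (nhds b) := by
    have hadd := hq0.add (tendsto_const_nhds (x := b) (f := l))
    rw [zero_add] at hadd
    refine Filter.Tendsto.congr' (heq0.mono fun h hh => ?_) hadd
    field_simp
    ring
  have hbpos : (0 : ℝ) < |b| := abs_pos.mpr hx'
  have hnb : ∀ᶠ y in nhds b, |b| / 2 < |y| :=
    (continuous_abs.tendsto b).eventually (eventually_gt_nhds (by linarith))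
  have hDb : ∀ᶠ h in l, |b| / 2 < |D h / h| := htend.eventually hnb
  have hDne : ∀ᶠ h in l, D h ≠ 0 := by
    refine hDb.mono fun h hh h0 => ?_
    rw [h0, zero_div, abs_zero] at hh
    linarith
  have hhD : (fun h : ℝ => h) =O[l] D := by
    rw [isBigO_iff]
    refine ⟨2 / |b|, (hDb.and heq0).mono fun h hh => ?_⟩
    obtain ⟨h1, h2⟩ := hh
    rw [abs_div] at h1
    have hha : (0 : ℝ) < |h| := abs_pos.mpr h2
    rw [Real.norm_eq_abs, Real.norm_eq_abs]
    rw [div_lt_div_iff₀ (by norm_num) hha] at h1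
    rw [div_mul_eq_mul_div, le_div_iff₀ hbpos]
    nlinarith
  have hinv : (fun h => (D h)⁻¹) =O[l] fun h => h⁻¹ :=
    hhD.inv_rev (heq0.mono fun h hh h0 => absurd h0 hh)
  have hnum : (fun h => N h - d * D h) =O[l] fun h => h ^ 3 := by
    have := (hN.sub (hD.const_mul_left d)).mono hle
    refine this.congr (fun h => ?_) (fun h => rfl)
    ring
  have hmul : (fun h => (N h - d * D h) * (D h)⁻¹) =O[l]
      fun h => h ^ 3 * h⁻¹ := hnum.mul hinv
  have hfinal : (fun h => N h / D h - d) =O[l] fun h => h ^ 2 := by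
    refine hmul.congr' (hDne.mono fun h hh => ?_) (heq0.mono fun h hh => ?_)
    · field_simp
    · field_simp
  exact hfinal
end

section
/- Let x : ℝ → ℝ and u : ℝ → ℝ be three times continuously differentiable in a neighbourhood of ξ₀ and of x(ξ₀) respectively, with x'(ξ₀) ≠ 0. Then the non-standard mid-point interpolation formula is second order accurate: as h → 0, [(x(ξ₀ + h/4) − x(ξ₀)) / (x(ξ₀ + h/4) − x(ξ₀ − h/4))]·u(x(ξ₀ − h/2)) + [(x(ξ₀) − x(ξ₀ − h/4)) / (x(ξ₀ + h/4) − x(ξ₀ − h/4))]·u(x(ξ₀ + h/2)) − u(x(ξ₀)) = O(h²). -/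
open Filter Asymptotics

/-- Power comparison near 0. -/
lemma aux_pow_le {m k : ℕ} (hk : k ≤ m) : (fun h : ℝ => h ^ m) =O[nhds 0] fun h => h ^ k := by
  rw [isBigO_iff]
  refine ⟨1, ?_⟩
  filter_upwards [Metric.ball_mem_nhds (0:ℝ) one_pos] with h hh
  rw [Metric.mem_ball, Real.dist_eq, sub_zero] at hh
  simp only [norm_pow, Real.norm_eq_abs, one_mul]
  exact pow_le_pow_of_le_one (abs_nonneg _) hh.le hk

/-- MVT step: if `f p = 0` and `deriv f = O((y-p)^n)` then `f = O((y-p)^(n+1))`. -/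
lemma aux_step {f : ℝ → ℝ} {p : ℝ} {n : ℕ}
    (hf : ∀ᶠ y in nhds p, DifferentiableAt ℝ f y) (h0 : f p = 0)
    (hd : (fun y => deriv f y) =O[nhds p] fun y => (y - p) ^ n) :
    f =O[nhds p] fun y => (y - p) ^ (n + 1) := by
  obtain ⟨C, hC⟩ := hd.bound
  have hC' : ∀ᶠ y in nhds p, ‖deriv f y‖ ≤ (max C 0) * |y - p| ^ n := by
    filter_upwards [hC] with y hy
    calc ‖deriv f y‖ ≤ C * ‖(y - p) ^ n‖ := hy
      _ ≤ (max C 0) * |y - p| ^ n := by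
          rw [Real.norm_eq_abs, abs_pow]
          exact mul_le_mul_of_nonneg_right (le_max_left _ _) (by positivity)
  obtain ⟨ε, hε, hball⟩ := Metric.eventually_nhds_iff_ball.1 (hf.and hC')
  rw [isBigO_iff]
  refine ⟨max C 0, Metric.eventually_nhds_iff_ball.2 ⟨ε, hε, fun y hy => ?_⟩⟩
  have hsub : Metric.closedBall p (dist y p) ⊆ Metric.ball p ε := fun z hz => by
    have : dist z p ≤ dist y p := Metric.mem_closedBall.1 hz
    exact Metric.mem_ball.2 (lt_of_le_of_lt this (Metric.mem_ball.1 hy))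
  have hdiff : ∀ z ∈ Metric.closedBall p (dist y p),
      HasDerivWithinAt f (deriv f z) (Metric.closedBall p (dist y p)) z :=
    fun z hz => ((hball z (hsub hz)).1.hasDerivAt).hasDerivWithinAt
  have hbound : ∀ z ∈ Metric.closedBall p (dist y p),
      ‖deriv f z‖ ≤ (max C 0) * |y - p| ^ n := by
    intro z hz
    refine le_trans (hball z (hsub hz)).2 ?_
    refine mul_le_mul_of_nonneg_left (pow_le_pow_left₀ (abs_nonneg _) ?_ n) (le_max_right _ _)
    have := Metric.mem_closedBall.1 hz
    rwa [Real.dist_eq, Real.dist_eq] at this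
  have := Convex.norm_image_sub_le_of_norm_hasDerivWithin_le hdiff hbound
    (convex_closedBall _ _) (Metric.mem_closedBall_self dist_nonneg)
    (Metric.mem_closedBall.2 le_rfl)
  rw [h0, sub_zero] at this
  calc ‖f y‖ ≤ (max C 0) * |y - p| ^ n * ‖y - p‖ := this
    _ = (max C 0) * ‖(y - p) ^ (n + 1)‖ := by
        rw [Real.norm_eq_abs, Real.norm_eq_abs, abs_pow, pow_succ]
        ring

/-- `deriv` of a `C^(n+1)` function is `C^n` at the point. -/
lemma aux_contDiffAt_deriv {f : ℝ → ℝ} {p : ℝ} {n : ℕ} (hf : ContDiffAt ℝ (n + 1) f p) :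
    ContDiffAt ℝ n (deriv f) p := by
  obtain ⟨s, hs, hcont⟩ := hf.contDiffOn le_rfl (by simp)
  obtain ⟨t, hts, ht, hpt⟩ := mem_nhds_iff.1 hs
  have hct : ContDiffOn ℝ ((n : WithTop ℕ∞) + 1) f t := by
    exact_mod_cast hcont.mono hts
  have := ((contDiffOn_succ_iff_deriv_of_isOpen ht).1 hct).2.2
  exact this.contDiffAt (ht.mem_nhds hpt)

/-- First-order Taylor with O(2) remainder for C² functions. -/
lemma aux_taylor1 {g : ℝ → ℝ} {p : ℝ} (hg : ContDiffAt ℝ 2 g p) :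
    (fun y => g y - g p - deriv g p * (y - p)) =O[nhds p] fun y => (y - p) ^ 2 := by
  have hgev : ∀ᶠ y in nhds p, DifferentiableAt ℝ g y := by
    filter_upwards [hg.eventually (by simp)] with y hy
    exact hy.differentiableAt (by norm_num)
  have hψ : DifferentiableAt ℝ (deriv g) p :=
    (aux_contDiffAt_deriv (n := 1) (by exact_mod_cast hg)).differentiableAt (by simp)
  have hφdiff : ∀ᶠ y in nhds p,
      DifferentiableAt ℝ (fun y => g y - g p - deriv g p * (y - p)) y := by
    filter_upwards [hgev] with y hy
    exact (hy.sub_const _).sub ((differentiableAt_id.sub_const _).const_mul _)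
  have hderiv : ∀ᶠ y in nhds p,
      deriv (fun y => g y - g p - deriv g p * (y - p)) y = deriv g y - deriv g p := by
    filter_upwards [hgev] with y hy
    have h2 : HasDerivAt (fun z : ℝ => g z - g p - deriv g p * (z - p))
        (deriv g y - deriv g p) y := by
      have ha : HasDerivAt (fun z : ℝ => deriv g p * (z - p)) (deriv g p) y := by
        simpa using ((hasDerivAt_id y).sub_const p).const_mul (deriv g p)
      exact (hy.hasDerivAt.sub_const (g p)).sub ha
    exact h2.deriv
  have hO : (fun y => deriv g y - deriv g p) =O[nhds p] fun y => (y - p) ^ 1 := by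
    simpa [pow_one] using hψ.hasFDerivAt.isBigO_sub
  exact aux_step (n := 1) hφdiff (by simp) (hO.congr' (EventuallyEq.symm hderiv) EventuallyEq.rfl)


/-- Second-order Taylor with O(3) remainder for C³ functions. -/
lemma aux_taylor2 {f : ℝ → ℝ} {p : ℝ} (hf : ContDiffAt ℝ 3 f p) :
    (fun y => f y - f p - deriv f p * (y - p) - deriv (deriv f) p / 2 * (y - p) ^ 2)
      =O[nhds p] fun y => (y - p) ^ 3 := by
  have hfev : ∀ᶠ y in nhds p, DifferentiableAt ℝ f y := by
    filter_upwards [hf.eventually (by simp)] with y hy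
    exact hy.differentiableAt (by norm_num)
  have hφdiff : ∀ᶠ y in nhds p, DifferentiableAt ℝ
      (fun y => f y - f p - deriv f p * (y - p) - deriv (deriv f) p / 2 * (y - p) ^ 2) y := by
    filter_upwards [hfev] with y hy
    exact (((hy.sub_const _).sub ((differentiableAt_id.sub_const _).const_mul _)).sub
      (((differentiableAt_id.sub_const _).pow 2).const_mul _))
  have hderiv : ∀ᶠ y in nhds p,
      deriv (fun y => f y - f p - deriv f p * (y - p) - deriv (deriv f) p / 2 * (y - p)^2) y
        = deriv f y - deriv f p - deriv (deriv f) p * (y - p) := by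
    filter_upwards [hfev] with y hy
    have ha : HasDerivAt (fun z : ℝ => deriv f p * (z - p)) (deriv f p) y := by
      simpa using ((hasDerivAt_id y).sub_const p).const_mul (deriv f p)
    have hb : HasDerivAt (fun z : ℝ => deriv (deriv f) p / 2 * (z - p) ^ 2)
        (deriv (deriv f) p * (y - p)) y := by
      have := (((hasDerivAt_id y).sub_const p).pow 2).const_mul (deriv (deriv f) p / 2)
      refine this.congr_deriv ?_
      push_cast
      simp
      ring
    have h2 := ((hy.hasDerivAt.sub_const (f p)).sub ha).sub hb
    exact h2.deriv
  have hO := aux_taylor1 (aux_contDiffAt_deriv (n := 2) (by exact_mod_cast hf))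
  exact aux_step (n := 2) hφdiff (by simp)
    (hO.congr' (EventuallyEq.symm hderiv) EventuallyEq.rfl)


/-- The non-standard mid-point interpolation formula on a quasi-uniform grid is second
order accurate: as `h → 0`,
`[(x(ξ₀+h/4)−x(ξ₀))/(x(ξ₀+h/4)−x(ξ₀−h/4))]·u(x(ξ₀−h/2)) +
 [(x(ξ₀)−x(ξ₀−h/4))/(x(ξ₀+h/4)−x(ξ₀−h/4))]·u(x(ξ₀+h/2)) − u(x(ξ₀)) = O(h²)`. -/
theorem nonstandard_midpoint_interpolation_second_order (x u : ℝ → ℝ) (ξ₀ : ℝ)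
    (hx : ContDiffAt ℝ 3 x ξ₀) (hu : ContDiffAt ℝ 3 u (x ξ₀))
    (hx' : deriv x ξ₀ ≠ 0) :
    (fun h : ℝ =>
        (x (ξ₀ + h / 4) - x ξ₀) / (x (ξ₀ + h / 4) - x (ξ₀ - h / 4)) * u (x (ξ₀ - h / 2)) +
          (x ξ₀ - x (ξ₀ - h / 4)) / (x (ξ₀ + h / 4) - x (ξ₀ - h / 4)) * u (x (ξ₀ + h / 2)) -
          u (x ξ₀)) =O[nhdsWithin 0 {(0 : ℝ)}ᶜ] fun h : ℝ => h ^ 2 := by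
  set l := nhdsWithin (0:ℝ) {(0 : ℝ)}ᶜ with hl
  set a := deriv x ξ₀ with ha
  set b2 := deriv (deriv x) ξ₀ with hb2
  set c := deriv u (x ξ₀) with hc
  -- Taylor expansion of x around ξ₀ composed with scaled arguments
  have key : ∀ α : ℝ, (fun h : ℝ =>
      x (ξ₀ + α * h) - x ξ₀ - (a * α * h + b2 / 2 * α ^ 2 * h ^ 2)) =O[nhds 0]
      fun h : ℝ => h ^ 3 := by
    intro α
    have hk : Tendsto (fun h : ℝ => ξ₀ + α * h) (nhds 0) (nhds ξ₀) := by
      have hcont : Continuous (fun h : ℝ => ξ₀ + α * h) :=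
        continuous_const.add (continuous_const.mul continuous_id)
      simpa using hcont.tendsto 0
    have h1 := (aux_taylor2 hx).comp_tendsto hk
    have h2 : (fun h : ℝ => x (ξ₀ + α * h) - x ξ₀ - (a * α * h + b2 / 2 * α ^ 2 * h ^ 2))
        =O[nhds 0] fun h : ℝ => α ^ 3 * h ^ 3 :=
      h1.congr (fun h => by simp only [Function.comp_apply]; ring)
        (fun h => by simp only [Function.comp_apply]; ring)
    exact h2.trans (isBigO_const_mul_self _ _ _)
  -- the four remainder estimates
  have hρ1 : (fun h : ℝ => (x (ξ₀ + h/4) - x ξ₀) - (a/4*h + b2/32*h^2)) =O[nhds 0]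
      (fun h : ℝ => h^3) :=
    (key (1/4)).congr (fun h => by rw [show ξ₀ + 1/4 * h = ξ₀ + h/4 by ring]; ring) (fun h => rfl)
  have hρ2 : (fun h : ℝ => (x (ξ₀ - h/2) - x ξ₀) - (-(a/2)*h + b2/8*h^2)) =O[nhds 0]
      (fun h : ℝ => h^3) :=
    (key (-(1/2))).congr (fun h => by rw [show ξ₀ + -(1/2) * h = ξ₀ - h/2 by ring]; ring)
      (fun h => rfl)
  have hρ3 : (fun h : ℝ => (x (ξ₀ - h/4) - x ξ₀) - (-(a/4)*h + b2/32*h^2)) =O[nhds 0]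
      (fun h : ℝ => h^3) :=
    (key (-(1/4))).congr (fun h => by rw [show ξ₀ + -(1/4) * h = ξ₀ - h/4 by ring]; ring)
      (fun h => rfl)
  have hρ4 : (fun h : ℝ => (x (ξ₀ + h/2) - x ξ₀) - (a/2*h + b2/8*h^2)) =O[nhds 0]
      (fun h : ℝ => h^3) :=
    (key (1/2)).congr (fun h => by rw [show ξ₀ + 1/2 * h = ξ₀ + h/2 by ring]; ring) (fun h => rfl)
  -- generic small facts
  have hh3 : (fun h : ℝ => h^3) =O[nhds 0] fun h : ℝ => h := by
    simpa [pow_one] using aux_pow_le (m := 3) (k := 1) (by norm_num)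
  have hpoly : ∀ c1 c2 : ℝ, (fun h : ℝ => c1*h + c2*h^2) =O[nhds 0] fun h : ℝ => h := by
    intro c1 c2
    have h1 : (fun h : ℝ => c1*h) =O[nhds 0] fun h : ℝ => h := isBigO_const_mul_self _ _ _
    have h2 : (fun h : ℝ => c2*h^2) =O[nhds 0] fun h : ℝ => h := by
      have := (isBigO_const_mul_self c2 (fun h : ℝ => h^2) (nhds 0)).trans
        (aux_pow_le (m := 2) (k := 1) one_le_two)
      simpa [pow_one] using this
    exact h1.add h2
  -- first order bounds for the increments
  have hincr : ∀ c1 c2 : ℝ, ∀ e : ℝ → ℝ,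
      ((fun h : ℝ => e h - (c1*h + c2*h^2)) =O[nhds 0] fun h : ℝ => h^3) →
      e =O[nhds 0] fun h : ℝ => h := by
    intro c1 c2 e he
    have := (he.trans hh3).add (hpoly c1 c2)
    exact this.congr (fun h => by ring) (fun h => rfl)
  have heA : (fun h : ℝ => x (ξ₀ + h/4) - x ξ₀) =O[nhds 0] fun h : ℝ => h := hincr _ _ _ hρ1
  have heC : (fun h : ℝ => x (ξ₀ - h/2) - x ξ₀) =O[nhds 0] fun h : ℝ => h := hincr _ _ _ hρ2
  have heB : (fun h : ℝ => x (ξ₀ - h/4) - x ξ₀) =O[nhds 0] fun h : ℝ => h := hincr _ _ _ hρ3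
  have heE : (fun h : ℝ => x (ξ₀ + h/2) - x ξ₀) =O[nhds 0] fun h : ℝ => h := hincr _ _ _ hρ4
  -- products of increments with remainders are O(h³)
  have h4le3 : (fun h : ℝ => h * h^3) =O[nhds 0] fun h : ℝ => h^3 :=
    (aux_pow_le (m := 4) (k := 3) (by norm_num)).congr (fun h => by ring) (fun h => rfl)
  have h6le3 : (fun h : ℝ => h^3 * h^3) =O[nhds 0] fun h : ℝ => h^3 :=
    (aux_pow_le (m := 6) (k := 3) (by norm_num)).congr (fun h => by ring) (fun h => rfl)
  have hterm : ∀ q ρ : ℝ → ℝ, (q =O[nhds 0] fun h : ℝ => h) →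
      (ρ =O[nhds 0] fun h : ℝ => h^3) →
      (fun h : ℝ => q h * ρ h) =O[nhds 0] fun h : ℝ => h^3 := by
    intro q ρ hq hρ
    exact (hq.mul hρ).trans h4le3
  -- N = O(h³)
  have hN : (fun h : ℝ => (x (ξ₀ + h/4) - x ξ₀) * (x (ξ₀ - h/2) - x ξ₀)
      + (x ξ₀ - x (ξ₀ - h/4)) * (x (ξ₀ + h/2) - x ξ₀)) =O[nhds 0] fun h : ℝ => h^3 := by
    have t0 : (fun h : ℝ => a * b2 / 32 * h^3) =O[nhds 0] fun h : ℝ => h^3 :=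
      isBigO_const_mul_self _ _ _
    have t1 := hterm _ _ (hpoly (a/4) (b2/32)) hρ2
    have t2 := hterm _ _ (hpoly (-(a/2)) (b2/8)) hρ1
    have t3 := (hρ1.mul hρ2).trans h6le3
    have t4 := hterm _ _ (hpoly (-(a/4)) (b2/32)) hρ4
    have t5 := hterm _ _ (hpoly (a/2) (b2/8)) hρ3
    have t6 := (hρ3.mul hρ4).trans h6le3
    have hsum := (((((t0.add t1).add t2).add t3).sub t4).sub t5).sub t6
    exact hsum.congr (fun h => by ring) (fun h => rfl)
  -- behaviour of the denominator
  have hdx : HasDerivAt x a ξ₀ := (hx.differentiableAt (by norm_num)).hasDerivAt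
  have hD : HasDerivAt (fun h : ℝ => x (ξ₀ + h/4) - x (ξ₀ - h/4)) (a/2) 0 := by
    have h1 : HasDerivAt (fun h : ℝ => ξ₀ + h/4) (1/4 : ℝ) 0 := by
      simpa using ((hasDerivAt_id (0:ℝ)).div_const 4).const_add ξ₀
    have h2 : HasDerivAt (fun h : ℝ => ξ₀ - h/4) (-(1/4) : ℝ) 0 := by
      simpa using HasDerivAt.const_sub ξ₀ ((hasDerivAt_id (0:ℝ)).div_const 4)
    have hdx1 : HasDerivAt x a (ξ₀ + 0/4) := by norm_num; exact hdx
    have hdx2 : HasDerivAt x a (ξ₀ - 0/4) := by norm_num; exact hdx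
    have h3 := (hdx1.comp 0 h1).sub (hdx2.comp 0 h2)
    simp only [Function.comp_def] at h3
    refine h3.congr_deriv ?_
    ring
  have hslope : Tendsto (fun h : ℝ => (x (ξ₀ + h/4) - x (ξ₀ - h/4)) / h) l (nhds (a/2)) := by
    have h1 := hasDerivAt_iff_tendsto_slope.1 hD
    refine h1.congr fun h => ?_
    rw [slope_def_field]
    norm_num
  have ha2 : a/2 ≠ 0 := div_ne_zero hx' two_ne_zero
  have hhD1 : (fun h : ℝ => h / (x (ξ₀ + h/4) - x (ξ₀ - h/4))) =O[l] (fun _ : ℝ => (1:ℝ)) := by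
    have h1 : Tendsto (fun h : ℝ => ((x (ξ₀ + h/4) - x (ξ₀ - h/4)) / h)⁻¹) l
        (nhds (a/2)⁻¹) := hslope.inv₀ ha2
    have h2 : Tendsto (fun h : ℝ => h / (x (ξ₀ + h/4) - x (ξ₀ - h/4))) l (nhds (a/2)⁻¹) :=
      h1.congr fun h => inv_div _ _
    exact h2.isBigO_one ℝ
  have hDne : ∀ᶠ h in l, x (ξ₀ + h/4) - x (ξ₀ - h/4) ≠ 0 := by
    filter_upwards [hslope.eventually_ne ha2] with h hh hzero
    exact hh (by rw [hzero, zero_div])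
  have hne : ∀ᶠ h : ℝ in l, h ≠ 0 := by
    filter_upwards [self_mem_nhdsWithin] with h hh
    simpa using hh
  -- remainders of u
  have huT := aux_taylor1 (hu.of_le (by norm_num))
  have hcx : ContinuousAt x ξ₀ := hx.continuousAt
  have hkm : Tendsto (fun h : ℝ => x (ξ₀ - h/2)) (nhds 0) (nhds (x ξ₀)) := by
    have h1 : Tendsto (fun h : ℝ => ξ₀ - h/2) (nhds 0) (nhds ξ₀) := by
      have hcont : Continuous fun h : ℝ => ξ₀ - h/2 :=
        continuous_const.sub (continuous_id.div_const 2)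
      simpa using hcont.tendsto 0
    exact hcx.tendsto.comp h1
  have hkp : Tendsto (fun h : ℝ => x (ξ₀ + h/2)) (nhds 0) (nhds (x ξ₀)) := by
    have h1 : Tendsto (fun h : ℝ => ξ₀ + h/2) (nhds 0) (nhds ξ₀) := by
      have hcont : Continuous fun h : ℝ => ξ₀ + h/2 :=
        continuous_const.add (continuous_id.div_const 2)
      simpa using hcont.tendsto 0
    exact hcx.tendsto.comp h1
  have hRm : (fun h : ℝ => u (x (ξ₀ - h/2)) - u (x ξ₀) - c * (x (ξ₀ - h/2) - x ξ₀))
      =O[nhds 0] fun h : ℝ => h^2 := (huT.comp_tendsto hkm).trans (heC.pow 2)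
  have hRp : (fun h : ℝ => u (x (ξ₀ + h/2)) - u (x ξ₀) - c * (x (ξ₀ + h/2) - x ξ₀))
      =O[nhds 0] fun h : ℝ => h^2 := (huT.comp_tendsto hkp).trans (heE.pow 2)
  -- bounded coefficients
  have hdivh : ∀ e : ℝ → ℝ, (e =O[nhds 0] fun h : ℝ => h) →
      (fun h : ℝ => e h * h⁻¹) =O[l] (fun _ : ℝ => (1:ℝ)) := by
    intro e he
    have h1 := (he.mono nhdsWithin_le_nhds).mul (isBigO_refl (fun h : ℝ => h⁻¹) l)
    refine h1.congr' EventuallyEq.rfl ?_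
    filter_upwards [hne] with h hh
    exact mul_inv_cancel₀ hh
  have hcoef : ∀ e : ℝ → ℝ, (e =O[nhds 0] fun h : ℝ => h) →
      (fun h : ℝ => e h / (x (ξ₀ + h/4) - x (ξ₀ - h/4))) =O[l] (fun _ : ℝ => (1:ℝ)) := by
    intro e he
    have h1 := (hdivh e he).mul hhD1
    refine (h1.congr' ?_ (by simp)).congr (fun h => rfl) (fun h => rfl)
    filter_upwards [hne] with h hh
    calc e h * h⁻¹ * (h / (x (ξ₀ + h/4) - x (ξ₀ - h/4)))
        = e h * (h⁻¹ * h) / (x (ξ₀ + h/4) - x (ξ₀ - h/4)) := by ring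
      _ = e h / (x (ξ₀ + h/4) - x (ξ₀ - h/4)) := by rw [inv_mul_cancel₀ hh, mul_one]
  have hAdiv := hcoef _ heA
  have hBdiv : (fun h : ℝ => (x ξ₀ - x (ξ₀ - h/4)) / (x (ξ₀ + h/4) - x (ξ₀ - h/4)))
      =O[l] (fun _ : ℝ => (1:ℝ)) := by
    have hB : (fun h : ℝ => x ξ₀ - x (ξ₀ - h/4)) =O[nhds 0] fun h : ℝ => h := by
      have := heB.neg_left
      exact this.congr (fun h => by ring) (fun h => rfl)
    exact hcoef _ hB
  -- the main term N / D is O(h²)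
  have hNdiv : (fun h : ℝ => ((x (ξ₀ + h/4) - x ξ₀) * (x (ξ₀ - h/2) - x ξ₀)
      + (x ξ₀ - x (ξ₀ - h/4)) * (x (ξ₀ + h/2) - x ξ₀)) / (x (ξ₀ + h/4) - x (ξ₀ - h/4)))
      =O[l] fun h : ℝ => h^2 := by
    have h1 : (fun h : ℝ => ((x (ξ₀ + h/4) - x ξ₀) * (x (ξ₀ - h/2) - x ξ₀)
        + (x ξ₀ - x (ξ₀ - h/4)) * (x (ξ₀ + h/2) - x ξ₀)) * h⁻¹) =O[l] fun h : ℝ => h^2 := by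
      have h0 := (hN.mono nhdsWithin_le_nhds).mul (isBigO_refl (fun h : ℝ => h⁻¹) l)
      refine h0.congr' EventuallyEq.rfl ?_
      filter_upwards [hne] with h hh
      rw [pow_succ, mul_assoc, mul_inv_cancel₀ hh, mul_one]
    have h2 := h1.mul hhD1
    refine h2.congr' ?_ (by simp)
    filter_upwards [hne] with h hh
    calc ((x (ξ₀ + h/4) - x ξ₀) * (x (ξ₀ - h/2) - x ξ₀)
          + (x ξ₀ - x (ξ₀ - h/4)) * (x (ξ₀ + h/2) - x ξ₀)) * h⁻¹
          * (h / (x (ξ₀ + h/4) - x (ξ₀ - h/4)))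
        = ((x (ξ₀ + h/4) - x ξ₀) * (x (ξ₀ - h/2) - x ξ₀)
          + (x ξ₀ - x (ξ₀ - h/4)) * (x (ξ₀ + h/2) - x ξ₀)) * (h⁻¹ * h)
          / (x (ξ₀ + h/4) - x (ξ₀ - h/4)) := by ring
      _ = ((x (ξ₀ + h/4) - x ξ₀) * (x (ξ₀ - h/2) - x ξ₀)
          + (x ξ₀ - x (ξ₀ - h/4)) * (x (ξ₀ + h/2) - x ξ₀))
          / (x (ξ₀ + h/4) - x (ξ₀ - h/4)) := by rw [inv_mul_cancel₀ hh, mul_one]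
  -- assembling
  have p1 : (fun h : ℝ => c * (((x (ξ₀ + h/4) - x ξ₀) * (x (ξ₀ - h/2) - x ξ₀)
      + (x ξ₀ - x (ξ₀ - h/4)) * (x (ξ₀ + h/2) - x ξ₀)) / (x (ξ₀ + h/4) - x (ξ₀ - h/4))))
      =O[l] fun h : ℝ => h^2 := hNdiv.const_mul_left c
  have p2 : (fun h : ℝ => (x (ξ₀ + h/4) - x ξ₀) / (x (ξ₀ + h/4) - x (ξ₀ - h/4))
      * (u (x (ξ₀ - h/2)) - u (x ξ₀) - c * (x (ξ₀ - h/2) - x ξ₀))) =O[l] fun h : ℝ => h^2 :=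
    (hAdiv.mul (hRm.mono nhdsWithin_le_nhds)).congr (fun h => rfl) (fun h => one_mul _)
  have p3 : (fun h : ℝ => (x ξ₀ - x (ξ₀ - h/4)) / (x (ξ₀ + h/4) - x (ξ₀ - h/4))
      * (u (x (ξ₀ + h/2)) - u (x ξ₀) - c * (x (ξ₀ + h/2) - x ξ₀))) =O[l] fun h : ℝ => h^2 :=
    (hBdiv.mul (hRp.mono nhdsWithin_le_nhds)).congr (fun h => rfl) (fun h => one_mul _)
  have hsum := (p1.add p2).add p3
  have keyid : ∀ (A B C E um up u0 cc D : ℝ), D ≠ 0 → D = A + B →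
      A/D*um + B/D*up - u0 = cc*((A*C+B*E)/D) + A/D*(um-u0-cc*C) + B/D*(up-u0-cc*E) := by
    intro A B C E um up u0 cc D hD0 hDAB
    subst hDAB
    field_simp
    ring
  refine hsum.congr' ?_ EventuallyEq.rfl
  filter_upwards [hDne] with h hD0
  exact (keyid (x (ξ₀ + h/4) - x ξ₀) (x ξ₀ - x (ξ₀ - h/4)) (x (ξ₀ - h/2) - x ξ₀)
    (x (ξ₀ + h/2) - x ξ₀) (u (x (ξ₀ - h/2))) (u (x (ξ₀ + h/2))) (u (x ξ₀)) c
    (x (ξ₀ + h/4) - x (ξ₀ - h/4)) hD0 (by ring)).symm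
end
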